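/- Let P(z) = a_h z^h + a_{h+1} z^{h+1} + ⋯ + a_n z^n be a primitive integer polynomial with a_h ≠ 0 and a_n ≠ 0. Then dim Ω_P = n - h, i.e., the projection of Ω_P onto coordinates (x_0, …, x_{k-1}) is all of 𝕋^k if and only if k ≤ n - h. -/

import Mathlib

/-- A finitely supported integer sequence (Laurent polynomial) is primitive if the
gcd of its coefficients is 1. -/
def Primitive (P : ℤ → ℤ) : Prop := ∀ d : ℤ, (∀ n : ℤ, d ∣ P n) → IsUnit d

/-- The stream zeros of `P`: the kernel in `𝕋^ℤ` of the convolution action of `P`. -/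
def streamZeros (P : ℤ → ℤ) : Set (ℤ → UnitAddCircle) :=
  {x | ∀ m : ℤ, (∑ᶠ n : ℤ, P n • x (m - n)) = 0}

/-- The representative in `[0,1)` of a point of the torus `𝕋 = ℝ/ℤ`. -/
noncomputable def rep (t : UnitAddCircle) : ℝ := ((AddCircle.equivIco 1 0) t : ℝ)

/-- `k₊ = min(∑_{aₙ<0} aₙ + 1, 0)`. -/
noncomputable def kLow (P : ℤ → ℤ) : ℤ := min ((∑ᶠ n : ℤ, min (P n) 0) + 1) 0

/-- `k* = max(∑_{aₙ>0} aₙ - 1, 0)`. -/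
noncomputable def kHigh (P : ℤ → ℤ) : ℤ := max ((∑ᶠ n : ℤ, max (P n) 0) - 1) 0



noncomputable def seqP (P : ℤ → ℤ) (h n : ℤ) (w : ℤ → ℝ) (t : ℤ) : ℝ :=
  if ht : t < 0 then
    (-(∑ j ∈ (Finset.Icc h (n-1)).attach, (P j.1 : ℝ) * seqP P h n w (t + n - j.1))) / (P n : ℝ)
  else if ht2 : t < n - h then w t
  else
    (-(∑ j ∈ (Finset.Icc (h+1) n).attach, (P j.1 : ℝ) * seqP P h n w (t + h - j.1))) / (P h : ℝ)
termination_by (if t < 0 then -t else t - (n - h) + 1).toNat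
decreasing_by
  · have := Finset.mem_Icc.mp j.2; simp_wf; split_ifs <;> omega
  · have := Finset.mem_Icc.mp j.2; simp_wf; split_ifs <;> omega

lemma seqP_window (P : ℤ → ℤ) (h n : ℤ) (w : ℤ → ℝ) (t : ℤ) (h0 : 0 ≤ t) (ht : t < n - h) :
    seqP P h n w t = w t := by
  rw [seqP, dif_neg (not_lt.mpr h0), dif_pos ht]

lemma seqP_spec (P : ℤ → ℤ) (h n : ℤ) (w : ℤ → ℝ) (hhn : h ≤ n)
    (hh : (P h : ℝ) ≠ 0) (hn : (P n : ℝ) ≠ 0) (m : ℤ) :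
    ∑ j ∈ Finset.Icc h n, (P j : ℝ) * seqP P h n w (m - j) = 0 := by
  rcases lt_or_ge m n with hm | hm
  · rw [Finset.Icc_eq_cons_Ico hhn, Finset.sum_cons]
    have hIco : Finset.Ico h n = Finset.Icc h (n-1) := by
      ext x; simp only [Finset.mem_Ico, Finset.mem_Icc]; omega
    rw [hIco]
    have hu : seqP P h n w (m - n) =
        (-(∑ j ∈ (Finset.Icc h (n-1)).attach, (P j.1 : ℝ) * seqP P h n w ((m - n) + n - j.1))) / (P n : ℝ) := by
      rw [seqP, dif_pos (by omega)]
    rw [Finset.sum_attach _ (fun j => (P j : ℝ) * seqP P h n w ((m - n) + n - j))] at hu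
    have hidx : ∀ j : ℤ, m - n + n - j = m - j := fun j => by ring
    simp only [hidx] at hu
    rw [hu]; field_simp; ring
  · rw [Finset.Icc_eq_cons_Ioc hhn, Finset.sum_cons]
    have hIoc : Finset.Ioc h n = Finset.Icc (h+1) n := by
      ext x; simp only [Finset.mem_Ioc, Finset.mem_Icc]; omega
    rw [hIoc]
    have hu : seqP P h n w (m - h) =
        (-(∑ j ∈ (Finset.Icc (h+1) n).attach, (P j.1 : ℝ) * seqP P h n w ((m - h) + h - j.1))) / (P h : ℝ) := by
      rw [seqP, dif_neg (by omega), dif_neg (by omega)]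
    rw [Finset.sum_attach _ (fun j => (P j : ℝ) * seqP P h n w ((m - h) + h - j))] at hu
    have hidx : ∀ j : ℤ, m - h + h - j = m - j := fun j => by ring
    simp only [hidx] at hu
    rw [hu]; field_simp; ring

lemma rep_coe (t : UnitAddCircle) : ((rep t : ℝ) : UnitAddCircle) = t :=
  (AddCircle.equivIco 1 0).symm_apply_apply t

noncomputable def torusHom : ℝ →+ UnitAddCircle := QuotientAddGroup.mk' _

lemma torusHom_eq (r : ℝ) : (r : UnitAddCircle) = torusHom r := rfl

lemma half_ne_zero : ((1/2 : ℝ) : UnitAddCircle) ≠ 0 := by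
  intro h0
  obtain ⟨z, hz⟩ := (AddCircle.coe_eq_zero_iff _).mp h0
  rw [zsmul_eq_mul, mul_one] at hz
  have h2 : (2 * z : ℤ) = (1 : ℤ) := by
    have : ((2 * z : ℤ) : ℝ) = ((1 : ℤ) : ℝ) := by push_cast; linarith
    exact_mod_cast this
  omega


theorem stmt11 (P : ℤ → ℤ) (h n : ℤ) (hhn : h ≤ n) (hprim : Primitive P)
    (hh : P h ≠ 0) (hn : P n ≠ 0) (hsupp : ∀ m : ℤ, m < h ∨ n < m → P m = 0) :
    ∀ k : ℕ,
      ((∀ v : Fin k → UnitAddCircle, ∃ x ∈ streamZeros P, ∀ i : Fin k, x (i : ℤ) = v i) ↔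
        (k : ℤ) ≤ n - h) := by
  have hhR : (P h : ℝ) ≠ 0 := Int.cast_ne_zero.mpr hh
  have hnR : (P n : ℝ) ≠ 0 := Int.cast_ne_zero.mpr hn
  intro k
  constructor
  · intro hsurj
    by_contra hk
    push_neg at hk
    have hk1 : 0 < k := by omega
    set v : Fin k → UnitAddCircle :=
      fun i => if (i : ℕ) = 0 then ((1/(2*(P n : ℝ)) : ℝ) : UnitAddCircle) else 0 with hv
    obtain ⟨x, hx, hxv⟩ := hsurj v
    have heq := hx n
    have hsub : (Function.support fun j : ℤ => P j • x (n - j)) ⊆ (Finset.Icc h n : Set ℤ) := by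
      intro j hj
      by_contra hj2
      simp only [Finset.coe_Icc, Set.mem_Icc, not_and_or, not_le] at hj2
      have hPj : P j = 0 := hsupp j (by omega)
      simp [Function.mem_support, hPj] at hj
    rw [finsum_eq_finset_sum_of_support_subset _ hsub] at heq
    have hval : ∀ j ∈ Finset.Icc h n, j ≠ n → P j • x (n - j) = 0 := by
      intro j hj hjn
      rw [Finset.mem_Icc] at hj
      have hfin : (n - j).toNat < k := by omega
      have hcoe : ((⟨(n - j).toNat, hfin⟩ : Fin k) : ℤ) = n - j := by
        simp; omega
      have := hxv ⟨(n - j).toNat, hfin⟩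
      rw [hcoe] at this
      rw [this, hv]
      simp only
      rw [if_neg (by simp; omega)]
      simp
    rw [Finset.sum_eq_single_of_mem n (Finset.mem_Icc.mpr ⟨hhn, le_refl n⟩) hval] at heq
    have hx0 : x 0 = ((1/(2*(P n : ℝ)) : ℝ) : UnitAddCircle) := by
      have hcoe : ((⟨0, hk1⟩ : Fin k) : ℤ) = 0 := by simp
      have := hxv ⟨0, hk1⟩
      rw [hcoe] at this
      rw [this, hv]
      simp
    rw [sub_self, hx0] at heq
    rw [torusHom_eq, ← map_zsmul] at heq
    rw [zsmul_eq_mul] at heq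
    have : (P n : ℝ) * (1/(2*(P n : ℝ))) = 1/2 := by field_simp
    rw [this] at heq
    exact half_ne_zero heq
  · intro hk v
    set w : ℤ → ℝ := fun i => if hi : 0 ≤ i ∧ i < (k : ℤ) then rep (v ⟨i.toNat, by omega⟩) else 0
      with hw
    refine ⟨fun t => ((seqP P h n w t : ℝ) : UnitAddCircle), ?_, ?_⟩
    · intro m
      have hsub : (Function.support fun j : ℤ => P j • ((seqP P h n w (m - j) : ℝ) : UnitAddCircle))
          ⊆ (Finset.Icc h n : Set ℤ) := by
        intro j hj
        by_contra hj2
        simp only [Finset.coe_Icc, Set.mem_Icc, not_and_or, not_le] at hj2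
        have hPj : P j = 0 := hsupp j (by omega)
        simp [Function.mem_support, hPj] at hj
      rw [finsum_eq_finset_sum_of_support_subset _ hsub]
      have hterm : ∀ j : ℤ, P j • ((seqP P h n w (m - j) : ℝ) : UnitAddCircle)
          = torusHom ((P j : ℝ) * seqP P h n w (m - j)) := by
        intro j
        rw [torusHom_eq, ← map_zsmul, zsmul_eq_mul]
      simp only [hterm]
      rw [← map_sum, seqP_spec P h n w hhn hhR hnR m, map_zero]
    · intro i
      show ((seqP P h n w ((i : ℕ) : ℤ) : ℝ) : UnitAddCircle) = v i
      have hi1 : (0 : ℤ) ≤ (i : ℤ) := Int.natCast_nonneg _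
      have hi2 : (i : ℤ) < n - h := by
        have := i.isLt
        omega
      rw [seqP_window P h n w _ hi1 hi2, hw]
      simp only
      rw [dif_pos ⟨hi1, by exact_mod_cast i.isLt⟩]
      have hfin : (⟨((i : ℤ)).toNat, by omega⟩ : Fin k) = i := by
        ext; simp
      rw [hfin, rep_coe]
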